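/- arXiv:2102.03976 — 5 statements merged into one kernel-verified Lean document; each statement's English description precedes it below -/
import Mathlib

section
/- (Non-normality criterion) Let G be a finite group, S ⊆ G with 1 ∉ S, and let H, K be subgroups with 1 < H ≤ K < G and H normal in G. Assume S \ K is a union of cosets of H in G, and there exist x ∉ K and y ∈ H with y^x ≠ y⁻¹. Then the Cayley digraph Cay(G,S) is not normal, i.e., R(G) is not a normal subgroup of Aut(Cay(G,S)). -/
/-- The arc relation of the Cayley digraph `Cay(G,S)`. -/
def cayArc {G : Type*} [Group G] (S : Set G) (u v : G) : Prop := ∃ s ∈ S, v = s * u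

/-- The automorphism group of the Cayley digraph `Cay(G,S)`. -/
def cayAut {G : Type*} [Group G] (S : Set G) : Subgroup (Equiv.Perm G) where
  carrier := {f | ∀ u v : G, cayArc S u v ↔ cayArc S (f u) (f v)}
  one_mem' := by intro u v; rfl
  mul_mem' := by intro f g hf hg u v; exact (hg u v).trans (hf (g u) (g v))
  inv_mem' := by intro f hf u v; simpa using (hf (f⁻¹ u) (f⁻¹ v)).symm

/-- The right regular representation `R(G)` as a subgroup of the symmetric group on `G`. -/
def rmulSub (G : Type*) [Group G] : Subgroup (Equiv.Perm G) where
  carrier := Set.range (fun g : G => Equiv.mulRight g)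
  one_mem' := ⟨1, by ext x; simp⟩
  mul_mem' := by rintro _ _ ⟨a, rfl⟩ ⟨b, rfl⟩; exact ⟨b * a, by ext x; simp [mul_assoc]⟩
  inv_mem' := by rintro _ ⟨a, rfl⟩; exact ⟨a⁻¹, by ext x; simp⟩

/-- Non-normality criterion: let `G` be a finite group, `S ⊆ G` with `1 ∉ S`, and
`H ≤ K` subgroups with `1 < H`, `K < G`, `H ⊴ G`. If `S \ K` is a union of cosets of
`H`, and there are `x ∉ K` and `y ∈ H` with `y^x ≠ y⁻¹`, then `Cay(G,S)` is not
normal: `R(G)` is not a normal subgroup of `Aut(Cay(G,S))`. -/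
theorem stmt11 {G : Type*} [Group G] [Fintype G] (S : Set G) (hS : (1 : G) ∉ S)
    (H K : Subgroup G) (hH : H ≠ ⊥) (hHK : H ≤ K) (hK : K ≠ ⊤) (hHn : H.Normal)
    (hcosets : ∀ s ∈ S, s ∉ K → ∀ h ∈ H, h * s ∈ S ∧ h * s ∉ K)
    (hx : ∃ x : G, x ∉ K ∧ ∃ y ∈ H, x⁻¹ * y * x ≠ y⁻¹) :
    ¬ (∀ f ∈ cayAut S, ∀ r ∈ rmulSub G, f * r * f⁻¹ ∈ rmulSub G) := by
  classical
  intro hnorm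
  obtain ⟨x, hxK, y, hyH, hxy⟩ := hx
  have hyK : y ∈ K := hHK hyH
  -- arc characterization
  have arc_iff : ∀ u v : G, cayArc S u v ↔ v * u⁻¹ ∈ S := by
    intro u v
    constructor
    · rintro ⟨s, hs, rfl⟩; simpa using hs
    · intro h; exact ⟨v * u⁻¹, h, by group⟩
  -- coset membership helper
  have mem_iff : ∀ h ∈ H, ∀ a : G, a ∉ K → (a ∈ S ↔ h * a ∈ S) := by
    intro h hh a haK
    constructor
    · intro haS; exact (hcosets a haS haK h hh).1
    · intro hhaS
      have hhaK : h * a ∉ K := by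
        intro hmem
        exact haK (by simpa using K.mul_mem (K.inv_mem (hHK hh)) hmem)
      have := (hcosets (h * a) hhaS hhaK h⁻¹ (H.inv_mem hh)).1
      simpa [mul_assoc] using this
  -- the permutation f
  have hmem_mul : ∀ g : G, g ∉ K → g * y ∉ K := by
    intro g hg hmem
    exact hg (by simpa using K.mul_mem hmem (K.inv_mem hyK))
  have hmem_mul' : ∀ g : G, g ∉ K → g * y⁻¹ ∉ K := by
    intro g hg hmem
    exact hg (by simpa using K.mul_mem hmem hyK)
  let f : Equiv.Perm G :=
    { toFun := fun g => if g ∈ K then g else g * y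
      invFun := fun g => if g ∈ K then g else g * y⁻¹
      left_inv := by
        intro g
        by_cases hg : g ∈ K
        · simp [hg]
        · simp [hg, hmem_mul g hg]
      right_inv := by
        intro g
        by_cases hg : g ∈ K
        · simp [hg]
        · simp [hg, hmem_mul' g hg] }
  have hf_apply : ∀ g : G, f g = if g ∈ K then g else g * y := fun g => rfl
  have hf_symm : ∀ g : G, f⁻¹ g = if g ∈ K then g else g * y⁻¹ := fun g => rfl
  -- f is an automorphism
  have hfAut : f ∈ cayAut S := by
    intro u v
    rw [arc_iff, arc_iff]
    by_cases hu : u ∈ K <;> by_cases hv : v ∈ K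
    · simp [hf_apply, hu, hv]
    · -- u ∈ K, v ∉ K
      have haK : v * u⁻¹ ∉ K := by
        intro hmem; exact hv (by simpa [mul_assoc] using K.mul_mem hmem hu)
      have hconj : v * y * v⁻¹ ∈ H := hHn.conj_mem y hyH v
      have := mem_iff _ hconj (v * u⁻¹) haK
      rw [hf_apply, hf_apply]
      simp only [hu, hv, if_true, if_false, if_neg hv]
      convert this using 2
      group
    · -- u ∉ K, v ∈ K
      have haK : v * u⁻¹ ∉ K := by
        intro hmem
        exact hu (by simpa using K.inv_mem (K.mul_mem (K.inv_mem hv) hmem))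
      have hconj : v * y⁻¹ * v⁻¹ ∈ H := hHn.conj_mem y⁻¹ (H.inv_mem hyH) v
      have := mem_iff _ hconj (v * u⁻¹) haK
      rw [hf_apply, hf_apply]
      simp only [hu, hv, if_false, if_true]
      convert this using 2
      group
    · -- both outside K
      rw [hf_apply, hf_apply, if_neg hu, if_neg hv]
      constructor <;> intro hmem <;>
        · convert hmem using 1 <;> group
  -- derive the contradiction
  have hr : (Equiv.mulRight x : Equiv.Perm G) ∈ rmulSub G := ⟨x, rfl⟩
  obtain ⟨b, hb⟩ := hnorm f hfAut _ hr
  have h1 : b = x * y := by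
    have := congrArg (fun e : Equiv.Perm G => e (1 : G)) hb
    simp only [Equiv.Perm.mul_apply, Equiv.coe_mulRight] at this
    rw [hf_symm, hf_apply] at this
    simpa [K.one_mem, hxK] using this
  have hxi : x⁻¹ ∉ K := fun hmem => hxK (by simpa using K.inv_mem hmem)
  have harg : x⁻¹ * y⁻¹ * x ∈ K := by
    have : x⁻¹ * y⁻¹ * (x⁻¹)⁻¹ ∈ H := hHn.conj_mem y⁻¹ (H.inv_mem hyH) x⁻¹
    simpa using hHK this
  have h2 : x⁻¹ * b = x⁻¹ * y⁻¹ * x := by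
    have := congrArg (fun e : Equiv.Perm G => e x⁻¹) hb
    simp only [Equiv.Perm.mul_apply, Equiv.coe_mulRight] at this
    rw [hf_symm, hf_apply] at this
    rw [if_neg hxi] at this
    rw [if_pos (by simpa [mul_assoc] using harg)] at this
    simpa [mul_assoc] using this
  rw [h1] at h2
  apply hxy
  have h3 : y = x⁻¹ * y⁻¹ * x := by simpa [mul_assoc] using h2
  have := congrArg (fun z : G => z⁻¹) h3
  simp only [mul_inv_rev, inv_inv] at this
  rw [this]; group
end

section
/- Let G be a finite group, S ⊆ G, H ⊴ G, K a subgroup with H ≤ K < G, and suppose S \ K is a union of cosets of H in G. For any u, v ∈ G with Ku ≠ Kv and any k₁, k₂ ∈ K, the induced bipartite sub-digraph of Cay(G,S) between the cosets Hk₁u and Hk₂v is either empty (no arcs) or complete (every arc from Hk₁u to Hk₂v is present). -/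
/-- Let `G` be a finite group, `S ⊆ G`, `H ⊴ G`, `H ≤ K < G`, and suppose `S \ K` is a
union of cosets of `H`. For `u, v ∈ G` with `Ku ≠ Kv` (i.e. `u * v⁻¹ ∉ K`) and
`k₁, k₂ ∈ K`, the induced bipartite sub-digraph of `Cay(G,S)` between the cosets
`H k₁ u` and `H k₂ v` is either empty or complete. -/
theorem stmt12 {G : Type*} [Group G] [Fintype G] (S : Set G)
    (H K : Subgroup G) (hHK : H ≤ K) (hK : K ≠ ⊤) (hHn : H.Normal)
    (hcosets : ∀ s ∈ S, s ∉ K → ∀ h ∈ H, h * s ∈ S ∧ h * s ∉ K)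
    (u v : G) (huv : u * v⁻¹ ∉ K) (k₁ k₂ : G) (hk₁ : k₁ ∈ K) (hk₂ : k₂ ∈ K) :
    (∀ h₁ ∈ H, ∀ h₂ ∈ H, ¬ cayArc S (h₁ * k₁ * u) (h₂ * k₂ * v)) ∨
    (∀ h₁ ∈ H, ∀ h₂ ∈ H, cayArc S (h₁ * k₁ * u) (h₂ * k₂ * v)) := by
  by_cases hex : ∃ h₁ ∈ H, ∃ h₂ ∈ H, cayArc S (h₁ * k₁ * u) (h₂ * k₂ * v)
  · right
    obtain ⟨h₁, hh₁, h₂, hh₂, s₀, hs₀S, heq⟩ := hex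
    have hs₀ : s₀ = h₂ * k₂ * v * (h₁ * k₁ * u)⁻¹ := by
      rw [heq]; group
    have hs₀K : s₀ ∉ K := by
      intro hmem
      apply huv
      have : u * v⁻¹ = k₁⁻¹ * h₁⁻¹ * s₀⁻¹ * h₂ * k₂ := by rw [hs₀]; group
      rw [this]
      exact K.mul_mem (K.mul_mem (K.mul_mem (K.mul_mem (K.inv_mem hk₁)
        (K.inv_mem (hHK hh₁))) (K.inv_mem hmem)) (hHK hh₂)) hk₂
    intro h₁' hh₁' h₂' hh₂'
    set g : G := k₂ * v * u⁻¹ * k₁⁻¹ with hg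
    set h : G := h₂' * (g * (h₁'⁻¹ * h₁) * g⁻¹) * h₂⁻¹ with hh
    have hhH : h ∈ H :=
      H.mul_mem (H.mul_mem hh₂' (hHn.conj_mem _ (H.mul_mem (H.inv_mem hh₁') hh₁) g))
        (H.inv_mem hh₂)
    obtain ⟨hS', _⟩ := hcosets s₀ hs₀S hs₀K h hhH
    exact ⟨h * s₀, hS', by rw [hs₀, hh, hg]; group⟩
  · left
    push_neg at hex
    exact hex
end

section
/- Let C_{2^s m} = ⟨a⟩ × ⟨b⟩ with o(a) = 2^s, o(b) = m, s ≥ 3, and m odd. In Aut(C_{2^s m}), let β be the automorphism induced by a ↦ a^{2^{s-1}+1}, b ↦ b. Then in the holomorph Hol(C_{2^s m}), the element g = R(ab)β satisfies g² = R(a^{2^{s-1}+2} b²) and g has order 2^s m. -/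
/-- Let `C_{2^s m} = ⟨a⟩ × ⟨b⟩` with `o(a) = 2^s`, `o(b) = m`, `s ≥ 3`, `m` odd,
realized additively as `ZMod (2^s) × ZMod m` with `a = (1,0)`, `b = (0,1)`.
Let `β` be the automorphism `a ↦ a^{2^{s-1}+1}`, `b ↦ b`, i.e. the (bijective,
additive) map `(x, y) ↦ ((2^{s-1}+1) x, y)`. Then in the holomorph, the element
`g = R(ab)β` (first translate by `ab = (1,1)`, then apply `β`) satisfies
`g² = R(a^{2^{s-1}+2} b²)` and `g` has order `2^s m`. -/
theorem stmt13 (s m : ℕ) (hs : 3 ≤ s) (hm : Odd m) (hm0 : 0 < m) :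
    ∃ β : Equiv.Perm (ZMod (2 ^ s) × ZMod m),
      (∀ p q : ZMod (2 ^ s) × ZMod m, β (p + q) = β p + β q) ∧
      (∀ p : ZMod (2 ^ s) × ZMod m,
        β p = (((2 ^ (s - 1) + 1 : ℕ) : ZMod (2 ^ s)) * p.1, p.2)) ∧
      (β * Equiv.addRight ((1 : ZMod (2 ^ s)), (1 : ZMod m))) ^ 2 =
        Equiv.addRight (((2 ^ (s - 1) + 2 : ℕ) : ZMod (2 ^ s)), (2 : ZMod m)) ∧
      orderOf (β * Equiv.addRight ((1 : ZMod (2 ^ s)), (1 : ZMod m))) = 2 ^ s * m := by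
  obtain ⟨t, rfl⟩ : ∃ t, s = t + 3 := ⟨s - 3, by omega⟩
  haveI : NeZero m := ⟨hm0.ne'⟩
  have h1 : t + 3 - 1 = t + 2 := by omega
  set k : ZMod (2 ^ (t + 3)) := ((2 ^ (t + 2) + 1 : ℕ) : ZMod (2 ^ (t + 3))) with hk
  have hk2 : k * k = 1 := by
    rw [hk, ← Nat.cast_mul]
    have : (2 ^ (t + 2) + 1) * (2 ^ (t + 2) + 1) = 2 ^ (t + 3) * (2 ^ (t + 1) + 1) + 1 := by ring
    rw [this, Nat.cast_add, Nat.cast_mul, ZMod.natCast_self, zero_mul, zero_add, Nat.cast_one]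
  set β : Equiv.Perm (ZMod (2 ^ (t + 3)) × ZMod m) :=
    ⟨fun p => (k * p.1, p.2), fun p => (k * p.1, p.2),
      fun p => by simp [← mul_assoc, hk2], fun p => by simp [← mul_assoc, hk2]⟩ with hβ
  set v : ZMod (2 ^ (t + 3)) × ZMod m :=
    (((2 ^ (t + 2) + 2 : ℕ) : ZMod (2 ^ (t + 3))), (2 : ZMod m)) with hv
  set g := β * Equiv.addRight ((1 : ZMod (2 ^ (t + 3))), (1 : ZMod m)) with hg
  have hsq : g ^ 2 = Equiv.addRight v := by
    ext p
    · simp only [hg, hβ, hv, sq, Equiv.Perm.mul_apply, Equiv.coe_addRight, Equiv.coe_fn_mk,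
        Prod.fst_add, Prod.snd_add]
      show k * (k * (p.1 + 1) + 1) = p.1 + ((2 ^ (t + 2) + 2 : ℕ) : ZMod (2 ^ (t + 3)))
      rw [show k * (k * (p.1 + 1) + 1) = k * k * p.1 + (k * k + k) from by ring, hk2,
        one_mul, hk]
      push_cast
      ring
    · simp only [hg, hβ, hv, sq, Equiv.Perm.mul_apply, Equiv.coe_addRight, Equiv.coe_fn_mk,
        Prod.fst_add, Prod.snd_add]
      show p.2 + 1 + 1 = p.2 + 2
      ring
  have hmul : ∀ a b : ZMod (2 ^ (t + 3)) × ZMod m,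
      Equiv.addRight a * Equiv.addRight b = Equiv.addRight (a + b) := by
    intro a b
    apply Equiv.ext
    intro p
    simp only [Equiv.Perm.mul_apply, Equiv.coe_addRight]
    rw [add_assoc, add_comm b a]
  have hpow : ∀ (w : ZMod (2 ^ (t + 3)) × ZMod m) (n : ℕ),
      (Equiv.addRight w) ^ n = Equiv.addRight (n • w) := by
    intro w n
    induction n with
    | zero => apply Equiv.ext; intro p; simp
    | succ n ih =>
      rw [succ_nsmul, ← hmul, ← ih]
      exact pow_succ _ _
  have hone : ∀ w : ZMod (2 ^ (t + 3)) × ZMod m, Equiv.addRight w = 1 ↔ w = 0 := by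
    intro w
    constructor
    · intro h
      simpa using Equiv.ext_iff.mp h 0
    · rintro rfl
      ext p <;> simp
  have hordv : orderOf (Equiv.addRight v) = addOrderOf v := by
    apply Nat.dvd_antisymm
    · rw [orderOf_dvd_iff_pow_eq_one, hpow, hone]
      exact addOrderOf_nsmul_eq_zero v
    · rw [addOrderOf_dvd_iff_nsmul_eq_zero, ← hone, ← hpow]
      exact pow_orderOf_eq_one _
  have hcopm : Nat.Coprime 2 m := Nat.coprime_two_left.mpr hm
  have hvord : addOrderOf v = 2 ^ (t + 2) * m := by
    rw [hv, Prod.addOrderOf]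
    have h2s : addOrderOf (((2 ^ (t + 2) + 2 : ℕ) : ZMod (2 ^ (t + 3)))) = 2 ^ (t + 2) := by
      rw [ZMod.addOrderOf_coe _ (by positivity)]
      have hgcd : Nat.gcd (2 ^ (t + 3)) (2 ^ (t + 2) + 2) = 2 := by
        rw [show (2:ℕ) ^ (t + 2) + 2 = 2 * (2 ^ (t + 1) + 1) from by ring,
          show (2:ℕ) ^ (t + 3) = 2 * 2 ^ (t + 2) from by ring, Nat.gcd_mul_left]
        have hco : Nat.Coprime (2 ^ (t + 2)) (2 ^ (t + 1) + 1) :=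
          Nat.Coprime.pow_left _ (Nat.coprime_two_left.mpr ⟨2 ^ t, by ring⟩)
        rw [hco]
      rw [hgcd, show (2:ℕ) ^ (t + 3) = 2 ^ (t + 2) * 2 from by ring,
        Nat.mul_div_cancel _ two_pos]
    have h2m : addOrderOf (2 : ZMod m) = m := by
      rw [show (2 : ZMod m) = ((2 : ℕ) : ZMod m) from by push_cast; rfl,
        ZMod.addOrderOf_coe _ hm0.ne', Nat.Coprime.gcd_eq_one hcopm.symm, Nat.div_one]
    rw [h2s, h2m]
    exact (Nat.Coprime.pow_left _ hcopm).lcm_eq_mul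
  have hne : g ^ (2 ^ (t + 2) * m) ≠ 1 := by
    intro h
    have h2 : (g ^ 2) ^ (2 ^ (t + 1) * m) = 1 := by
      rw [← pow_mul, show 2 * (2 ^ (t + 1) * m) = 2 ^ (t + 2) * m from by ring, h]
    rw [hsq, hpow, hone] at h2
    have hd : 2 ^ (t + 2) * m ∣ 2 ^ (t + 1) * m := by
      rw [← hvord]
      exact addOrderOf_dvd_iff_nsmul_eq_zero.mpr h2
    have hle := Nat.le_of_dvd (by positivity) hd
    have hpos : 0 < 2 ^ (t + 1) * m := by positivity
    rw [show (2:ℕ) ^ (t + 2) * m = 2 * (2 ^ (t + 1) * m) from by ring] at hle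
    nlinarith
  have hop : orderOf (g ^ 2) = orderOf g / Nat.gcd (orderOf g) 2 := orderOf_pow' g two_ne_zero
  have hordg2 : orderOf (g ^ 2) = 2 ^ (t + 2) * m := by rw [hsq, hordv, hvord]
  have hd_eq : orderOf g = 2 ^ (t + 2) * m * Nat.gcd (orderOf g) 2 := by
    conv_lhs => rw [← Nat.div_mul_cancel (Nat.gcd_dvd_left (orderOf g) 2), ← hop, hordg2]
  refine ⟨β, fun p q => by simp [hβ, mul_add, Prod.add_def], fun p => by simp [hβ, h1, hk],
    by rw [h1]; exact hsq, ?_⟩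
  rw [← hg]
  rcases (Nat.dvd_prime Nat.prime_two).mp (Nat.gcd_dvd_right (orderOf g) 2) with h | h
  · exfalso
    rw [h, mul_one] at hd_eq
    exact hne (hd_eq ▸ pow_orderOf_eq_one g)
  · rw [hd_eq, h]
    ring
end

section
/- Let C_{2^s m} = ⟨a⟩ × ⟨b⟩ with o(a) = 2^s, o(b) = m, s ≥ 3, m odd. With g = R(ab)β as above (β: a ↦ a^{2^{s-1}+1}, b ↦ b), the cyclic group H = ⟨g⟩ acts regularly on the underlying set of C_{2^s m}, and H ≠ R(C_{2^s m}). -/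
/-- The group of right translations `R(G)` of an additive group, as a subgroup of the
symmetric group on `G`. -/
def raddSub (G : Type*) [AddGroup G] : Subgroup (Equiv.Perm G) where
  carrier := Set.range (fun g : G => Equiv.addRight g)
  one_mem' := ⟨0, by ext x; simp⟩
  mul_mem' := by rintro _ _ ⟨a, rfl⟩ ⟨b, rfl⟩; exact ⟨b + a, by ext x; simp [add_assoc]⟩
  inv_mem' := by rintro _ ⟨a, rfl⟩; exact ⟨-a, by ext x; simp⟩

/-- Let `C_{2^s m} = ⟨a⟩ × ⟨b⟩` with `o(a) = 2^s`, `o(b) = m`, `s ≥ 3`, `m` odd,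
realized additively as `ZMod (2^s) × ZMod m`. With `β : (x,y) ↦ ((2^{s-1}+1) x, y)`
and `g = R(ab)β`, the cyclic subgroup `H = ⟨g⟩` of the holomorph acts regularly on the
underlying set, and `H ≠ R(C_{2^s m})`. -/
theorem stmt14 (s m : ℕ) (hs : 3 ≤ s) (hm : Odd m) (hm0 : 0 < m) :
    ∃ β : Equiv.Perm (ZMod (2 ^ s) × ZMod m),
      (∀ p q : ZMod (2 ^ s) × ZMod m, β (p + q) = β p + β q) ∧
      (∀ p : ZMod (2 ^ s) × ZMod m,
        β p = (((2 ^ (s - 1) + 1 : ℕ) : ZMod (2 ^ s)) * p.1, p.2)) ∧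
      (∀ u v : ZMod (2 ^ s) × ZMod m,
        ∃! h : Subgroup.zpowers (β * Equiv.addRight ((1 : ZMod (2 ^ s)), (1 : ZMod m))),
          (h : Equiv.Perm (ZMod (2 ^ s) × ZMod m)) u = v) ∧
      Subgroup.zpowers (β * Equiv.addRight ((1 : ZMod (2 ^ s)), (1 : ZMod m))) ≠
        raddSub (ZMod (2 ^ s) × ZMod m) := by
  obtain ⟨s, rfl⟩ : ∃ t, s = t + 3 := ⟨s - 3, by omega⟩
  clear hs
  haveI : NeZero m := ⟨hm0.ne'⟩
  haveI : NeZero (2 ^ (s + 3)) := ⟨by positivity⟩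
  set c : ZMod (2 ^ (s + 3)) := ((2 ^ (s + 2) + 1 : ℕ) : ZMod (2 ^ (s + 3))) with hc
  have hnat : (2 ^ (s + 2) + 1) * (2 ^ (s + 2) + 1) = 2 ^ (s + 3) * (2 ^ (s + 1) + 1) + 1 := by
    simp [pow_add]; ring
  have hcsq : c * c = 1 := by
    rw [hc, ← Nat.cast_mul, hnat, Nat.cast_add, Nat.cast_mul, Nat.cast_one, ZMod.natCast_self,
      zero_mul, zero_add]
  set X := ZMod (2 ^ (s + 3)) × ZMod m with hX
  set β : Equiv.Perm X :=
    ⟨fun p => (c * p.1, p.2), fun p => (c * p.1, p.2),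
      fun p => by simp [← mul_assoc, hcsq],
      fun p => by simp [← mul_assoc, hcsq]⟩ with hβ
  set g : Equiv.Perm X := β * Equiv.addRight ((1 : ZMod (2 ^ (s + 3))), (1 : ZMod m)) with hgdef
  have hg : ∀ p : X, g p = (c * (p.1 + 1), p.2 + 1) := fun p => rfl
  set w : X := (1 + c, 2) with hw
  have hg2 : g * g = Equiv.addRight w := by
    refine Equiv.ext fun p => ?_
    show g (g p) = p + w
    rw [hg, hg]
    refine Prod.ext ?_ ?_
    · show c * (c * (p.1 + 1) + 1) = p.1 + (1 + c)
      rw [mul_add, ← mul_assoc, hcsq, one_mul, mul_one]; ring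
    · show p.2 + 1 + 1 = p.2 + 2
      ring
  have hge : ∀ k : ℤ, g ^ (2 * k) = Equiv.addRight (k • w) := by
    intro k
    rw [zpow_mul, zpow_two, hg2, Equiv.zsmul_addRight]
  -- coprimality facts
  have hcop_m2 : IsCoprime (m : ℤ) 2 := by
    have := (Nat.isCoprime_iff_coprime).mpr (Nat.coprime_two_right.mpr hm)
    exact_mod_cast this
  have hcop_p : IsCoprime ((2 : ℤ) ^ (s + 2)) ((2 : ℤ) ^ (s + 1) + 1) := by
    have hodd : Odd (2 ^ (s + 1) + 1) := Even.add_one (by simp [Nat.even_pow])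
    have := (Nat.isCoprime_iff_coprime).mpr
      (Nat.Coprime.pow_left (s + 2) (Nat.coprime_two_left.mpr hodd))
    exact_mod_cast this
  have hcop_pm : IsCoprime ((2 : ℤ) ^ (s + 2)) (m : ℤ) := by
    have := (Nat.isCoprime_iff_coprime).mpr
      (Nat.Coprime.pow_left (s + 2) (Nat.coprime_two_left.mpr hm))
    exact_mod_cast this
  -- key fixed point lemma
  have key : ∀ (u : X) (k : ℤ), (g ^ k) u = u → ((2 ^ (s + 3) * m : ℕ) : ℤ) ∣ k := by
    intro u k hk
    rcases Int.even_or_odd k with ⟨j, hj⟩ | ⟨j, hj⟩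
    · rw [show k = 2 * j by omega, hge] at hk
      have hw0 : j • w = 0 := by
        have h : u + j • w = u := hk
        simpa using h
      have h2 : (j : ZMod m) * 2 = 0 := by
        have := congrArg Prod.snd hw0
        rw [Prod.smul_snd] at this
        simpa [hw, zsmul_eq_mul] using this
      have h1 : (j : ZMod (2 ^ (s + 3))) * (1 + c) = 0 := by
        have := congrArg Prod.fst hw0
        rw [Prod.smul_fst] at this
        simpa [hw, zsmul_eq_mul, mul_add] using this
      have hmj : (m : ℤ) ∣ j := by
        refine hcop_m2.dvd_of_dvd_mul_right ?_
        rw [← ZMod.intCast_zmod_eq_zero_iff_dvd]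
        push_cast
        exact h2
      have hd1 : (2 : ℤ) ^ (s + 3) ∣ j * (2 ^ (s + 2) + 2) := by
        have h0 : ((j * (2 ^ (s + 2) + 2) : ℤ) : ZMod (2 ^ (s + 3))) = 0 := by
          push_cast
          rw [show ((2 : ZMod (2 ^ (s + 3))) ^ (s + 2) + 2) = 1 + c by
            rw [hc]; push_cast; ring]
          exact h1
        have := (ZMod.intCast_zmod_eq_zero_iff_dvd _ _).mp h0
        exact_mod_cast this
      have hd1' : (2 : ℤ) ^ (s + 2) ∣ j * (2 ^ (s + 1) + 1) := by
        obtain ⟨q, hq⟩ := hd1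
        refine ⟨q, mul_left_cancel₀ (two_ne_zero) ?_⟩
        have e1 : (2 : ℤ) * (j * (2 ^ (s + 1) + 1)) = j * (2 ^ (s + 2) + 2) := by
          rw [pow_succ]; ring
        have e2 : (2 : ℤ) * (2 ^ (s + 2) * q) = 2 ^ (s + 3) * q := by
          rw [pow_succ (2 : ℤ) (s + 2)]; ring
        rw [e1, e2, hq]
      have hpj : (2 : ℤ) ^ (s + 2) ∣ j := hcop_p.dvd_of_dvd_mul_right hd1'
      obtain ⟨q, hq⟩ := hcop_pm.mul_dvd hpj hmj
      refine ⟨q, ?_⟩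
      push_cast
      rw [show k = 2 * j by omega, hq, show (2 : ℤ) ^ (s + 3) = 2 * 2 ^ (s + 2) by
        rw [pow_succ]; ring]
      ring
    · rw [hj, zpow_add, zpow_one, hge] at hk
      have hk' : g u + j • w = u := hk
      have hfst : c * (u.1 + 1) + (j : ZMod (2 ^ (s + 3))) * (1 + c) = u.1 := by
        have := congrArg Prod.fst hk'
        rw [Prod.fst_add, Prod.smul_fst] at this
        simpa [hg, hw, zsmul_eq_mul, mul_add] using this
      exfalso
      have h2d : (2 : ℕ) ∣ 2 ^ (s + 3) := dvd_pow_self 2 (by omega)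
      let φ : ZMod (2 ^ (s + 3)) →+* ZMod 2 := ZMod.castHom h2d (ZMod 2)
      have hφc : φ c = 1 := by
        rw [hc, map_natCast]
        push_cast
        rw [show (2 : ZMod 2) = 0 by decide]
        simp
      have hφ := congrArg φ hfst
      simp only [map_add, map_mul, map_intCast, map_one, hφc, one_mul] at hφ
      rw [show (1 : ZMod 2) + 1 = 0 by decide] at hφ
      simp only [mul_zero, add_zero, mul_one] at hφ
      exact absurd (add_eq_left.mp hφ) one_ne_zero
  -- g has order dividing 2^(s+3) m
  have hgN : g ^ ((2 ^ (s + 3) * m : ℕ) : ℤ) = 1 := by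
    rw [show ((2 ^ (s + 3) * m : ℕ) : ℤ) = 2 * ((2 ^ (s + 2) * m : ℕ) : ℤ) by
      push_cast; rw [pow_succ (2 : ℤ) (s + 2)]; ring, hge]
    have hz : ((2 ^ (s + 2) * m : ℕ) : ℤ) • w = 0 := by
      refine Prod.ext ?_ ?_
      · show ((2 ^ (s + 2) * m : ℕ) : ℤ) • (1 + c) = 0
        rw [zsmul_eq_mul]
        push_cast
        rw [show (1 : ZMod (2 ^ (s + 3))) + c = ((2 ^ (s + 2) + 2 : ℕ) : ZMod (2 ^ (s + 3))) by
          rw [hc]; push_cast; ring]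
        rw [show ((2 : ZMod (2 ^ (s + 3))) ^ (s + 2) * (m : ZMod (2 ^ (s + 3)))) *
            ((2 ^ (s + 2) + 2 : ℕ) : ZMod (2 ^ (s + 3))) =
            ((2 ^ (s + 2) * m * (2 ^ (s + 2) + 2) : ℕ) : ZMod (2 ^ (s + 3))) by push_cast; ring]
        rw [ZMod.natCast_eq_zero_iff]
        exact ⟨m * (2 ^ (s + 1) + 1), by rw [pow_succ 2 (s + 2), pow_succ 2 (s + 1)]; ring⟩
      · show ((2 ^ (s + 2) * m : ℕ) : ℤ) • (2 : ZMod m) = 0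
        rw [zsmul_eq_mul]
        push_cast
        rw [show ((2 : ZMod m) ^ (s + 2) * (m : ZMod m)) * 2 = (m : ZMod m) * (2 ^ (s + 2) * 2)
          by ring, ZMod.natCast_self, zero_mul]
    rw [hz]
    exact Equiv.Perm.ext fun p => by simp
  refine ⟨β, ?_, ?_, ?_, ?_⟩
  · intro p q
    show (c * (p.1 + q.1), p.2 + q.2) = _
    simp [hβ, Prod.ext_iff, mul_add]
  · intro p
    show (c * p.1, p.2) = _
    rw [show s + 3 - 1 = s + 2 by omega]
  · -- regularity
    intro u v
    haveI : NeZero (2 ^ (s + 3) * m) := ⟨by positivity⟩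
    set N := 2 ^ (s + 3) * m with hN
    set f : ZMod N → X := fun k => (g ^ (k.val : ℤ)) u with hf
    have hfinj : Function.Injective f := by
      intro k1 k2 hke
      have hfix : (g ^ ((k1.val : ℤ) - (k2.val : ℤ))) u = u := by
        have e : g ^ ((k1.val : ℤ) - (k2.val : ℤ)) =
            g ^ (-(k2.val : ℤ)) * g ^ (k1.val : ℤ) := by
          rw [← zpow_add]; ring_nf
        have hke' : (g ^ ((k1.val : ℤ))) u = (g ^ ((k2.val : ℤ))) u := hke
        rw [e, Equiv.Perm.mul_apply, hke', ← Equiv.Perm.mul_apply, ← zpow_add,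
          neg_add_cancel, zpow_zero, Equiv.Perm.one_apply]
      have hd := key u _ hfix
      have hcast : ((k1.val : ℤ) : ZMod N) = ((k2.val : ℤ) : ZMod N) := by
        have := (ZMod.intCast_zmod_eq_zero_iff_dvd _ N).mpr hd
        rwa [Int.cast_sub, sub_eq_zero] at this
      rwa [Int.cast_natCast, Int.cast_natCast, ZMod.natCast_rightInverse k1,
        ZMod.natCast_rightInverse k2] at hcast
    have hfsurj : Function.Surjective f := by
      have hcard : Fintype.card (ZMod N) = Fintype.card X := by
        simp [hN, hX, ZMod.card]
      exact ((Fintype.bijective_iff_injective_and_card f).mpr ⟨hfinj, hcard⟩).2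
    obtain ⟨k, hk⟩ := hfsurj v
    refine ⟨⟨g ^ ((k.val : ℤ)), Subgroup.mem_zpowers_iff.mpr ⟨(k.val : ℤ), rfl⟩⟩, hk, ?_⟩
    rintro ⟨h, hmem⟩ hhu
    obtain ⟨j, hj⟩ := Subgroup.mem_zpowers_iff.mp hmem
    have hfix : (g ^ (j - (k.val : ℤ))) u = u := by
      have e : g ^ (j - (k.val : ℤ)) = g ^ (-(k.val : ℤ)) * g ^ j := by
        rw [← zpow_add]; ring_nf
      rw [e, Equiv.Perm.mul_apply, hj]
      show (g ^ (-(k.val : ℤ))) (h u) = u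
      rw [hhu, ← hk]
      show (g ^ (-(k.val : ℤ))) ((g ^ ((k.val : ℤ))) u) = u
      rw [← Equiv.Perm.mul_apply, ← zpow_add, neg_add_cancel, zpow_zero, Equiv.Perm.one_apply]
    obtain ⟨q, hq⟩ := key u _ hfix
    have hje : g ^ j = g ^ ((k.val : ℤ)) := by
      have : j = (k.val : ℤ) + ((2 ^ (s + 3) * m : ℕ) : ℤ) * q := by linarith
      rw [this, zpow_add, zpow_mul, hgN, one_zpow, mul_one]
    refine Subtype.ext ?_
    show h = g ^ ((k.val : ℤ))
    rw [← hj]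
    exact hje
  · -- not equal to translations
    intro heq
    have hgmem : g ∈ raddSub X := by rw [← heq]; exact Subgroup.mem_zpowers g
    obtain ⟨a, ha⟩ := hgmem
    have h0 : ((0 : ZMod (2 ^ (s + 3))), (0 : ZMod m)) + a = (c, 1) := by
      have := congrArg (fun e : Equiv.Perm X => e ((0 : ZMod (2 ^ (s + 3))), (0 : ZMod m))) ha
      simpa [hg] using this
    have h1 : ((1 : ZMod (2 ^ (s + 3))), (0 : ZMod m)) + a = (c * (1 + 1), 1) := by
      have := congrArg (fun e : Equiv.Perm X => e ((1 : ZMod (2 ^ (s + 3))), (0 : ZMod m))) ha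
      simpa [hg] using this
    have ha' : a = (c, 1) := by exact (zero_add a).symm.trans h0
    rw [ha'] at h1
    have hfst : (1 : ZMod (2 ^ (s + 3))) + c = c * (1 + 1) := by
      have := congrArg Prod.fst h1
      exact this
    have hc1 : c = 1 := by linear_combination -hfst
    rw [hc] at hc1
    have : ((2 ^ (s + 2) : ℕ) : ZMod (2 ^ (s + 3))) = 0 := by
      have : ((2 ^ (s + 2) + 1 : ℕ) : ZMod (2 ^ (s + 3))) - 1 = 0 := by rw [hc1]; ring
      rwa [Nat.cast_add, Nat.cast_one, add_sub_cancel_right] at this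
    rw [ZMod.natCast_eq_zero_iff] at this
    have hle := Nat.le_of_dvd (by positivity) this
    have hlt : (2 : ℕ) ^ (s + 2) < 2 ^ (s + 3) := Nat.pow_lt_pow_right (by omega) (by omega)
    omega
end

section
/- Let G = ⟨a⟩ be cyclic of order 2^r with r ≥ 3, and S = {a, a², a^{2^{r-1}+1}}. Then the Cayley digraph Cay(G,S) is not a CI-digraph: there exists T ⊆ G with Cay(G,S) ≅ Cay(G,T) as digraphs but T ≠ S^σ for every σ ∈ Aut(G). -/
/-- The arc relation of the Cayley digraph of an additive group:
arc from `u` to `v` iff `v = s + u` for some `s ∈ S`. -/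
def cayArcAdd {G : Type*} [AddGroup G] (S : Set G) (u v : G) : Prop := ∃ s ∈ S, v = s + u

namespace Stmt16Aux

/-- `m = 2^(r-1)` in `ZMod (2^r)`, the unique element of additive order 2. -/
def mA (r : ℕ) : ZMod (2^r) := ((2^(r-1) : ℕ) : ZMod (2^r))

lemma dvd4 (r : ℕ) (hr : 3 ≤ r) : (4:ℕ) ∣ 2^r := by
  have : (4:ℕ) = 2^2 := rfl
  exact this ▸ pow_dvd_pow 2 (by omega)

/-- Reduction mod 4. -/
def piA (r : ℕ) (hr : 3 ≤ r) : ZMod (2^r) →+* ZMod 4 := ZMod.castHom (dvd4 r hr) (ZMod 4)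

/-- The graph isomorphism: add `m` to elements that are `2` or `3` mod `4`. -/
def fA (r : ℕ) (hr : 3 ≤ r) (x : ZMod (2^r)) : ZMod (2^r) :=
  x + if piA r hr x = 2 ∨ piA r hr x = 3 then mA r else 0

variable (r : ℕ) (hr : 3 ≤ r)

lemma hmm (hr : 3 ≤ r) : mA r + mA r = 0 := by
  have h : (2:ℕ)^(r-1) + 2^(r-1) = 2^r := by
    rw [← two_mul, ← pow_succ']
    congr 1
    omega
  rw [mA, ← Nat.cast_add, h, ZMod.natCast_self]

lemma hm0 (hr : 3 ≤ r) : mA r ≠ 0 := by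
  rw [mA, Ne, ZMod.natCast_eq_zero_iff]
  rw [Nat.pow_dvd_pow_iff_le_right (by norm_num)]
  omega

lemma hpim : piA r hr (mA r) = 0 := by
  rw [mA, piA, map_natCast, ZMod.natCast_eq_zero_iff]
  have : (4:ℕ) = 2^2 := rfl
  exact this ▸ pow_dvd_pow 2 (by omega)

lemma hpi1 : piA r hr 1 = 1 := map_one _

lemma hpi2 : piA r hr 2 = 2 := by rw [piA]; exact map_ofNat _ 2

lemma hcase (x : ZMod (2^r)) : piA r hr x = 0 ∨ piA r hr x = 1 ∨ piA r hr x = 2 ∨ piA r hr x = 3 := by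
  generalize piA r hr x = z
  revert z
  decide

lemma hST (x s : ZMod (2^r)) (hs : s ∈ ({1, 2, mA r + 1} : Set (ZMod (2^r)))) :
    ∃ t ∈ ({1, mA r + 1, mA r + 2} : Set (ZMod (2^r))), fA r hr (s + x) = t + fA r hr x := by
  rcases hs with rfl | rfl | rfl <;>
    rcases hcase r hr x with h | h | h | h <;>
    simp only [fA, map_add, h, hpim, hpi1, hpi2]
  · exact ⟨1, by simp, by rw [if_neg (by decide), if_neg (by decide)]; ring⟩
  · exact ⟨mA r + 1, by simp, by rw [if_pos (by decide), if_neg (by decide)]; ring⟩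
  · exact ⟨1, by simp, by rw [if_pos (by decide), if_pos (by decide)]; ring⟩
  · exact ⟨mA r + 1, by simp, by rw [if_neg (by decide), if_pos (by decide)]; linear_combination -hmm r hr⟩
  · exact ⟨mA r + 2, by simp, by rw [if_pos (by decide), if_neg (by decide)]; ring⟩
  · exact ⟨mA r + 2, by simp, by rw [if_pos (by decide), if_neg (by decide)]; ring⟩
  · exact ⟨mA r + 2, by simp, by rw [if_neg (by decide), if_pos (by decide)]; linear_combination -hmm r hr⟩
  · exact ⟨mA r + 2, by simp, by rw [if_neg (by decide), if_pos (by decide)]; linear_combination -hmm r hr⟩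
  · exact ⟨mA r + 1, by simp, by rw [if_neg (by decide), if_neg (by decide)]; ring⟩
  · exact ⟨1, by simp, by rw [if_pos (by decide), if_neg (by decide)]; linear_combination hmm r hr⟩
  · exact ⟨mA r + 1, by simp, by rw [if_pos (by decide), if_pos (by decide)]; ring⟩
  · exact ⟨1, by simp, by rw [if_neg (by decide), if_pos (by decide)]; ring⟩

lemma hTS (x t : ZMod (2^r)) (ht : t ∈ ({1, mA r + 1, mA r + 2} : Set (ZMod (2^r)))) :
    ∃ s ∈ ({1, 2, mA r + 1} : Set (ZMod (2^r))), fA r hr (t + x) = s + fA r hr x := by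
  rcases ht with rfl | rfl | rfl <;>
    rcases hcase r hr x with h | h | h | h <;>
    simp only [fA, map_add, h, hpim, hpi1, hpi2]
  · exact ⟨1, by simp, by rw [if_neg (by decide), if_neg (by decide)]; ring⟩
  · exact ⟨mA r + 1, by simp, by rw [if_pos (by decide), if_neg (by decide)]; ring⟩
  · exact ⟨1, by simp, by rw [if_pos (by decide), if_pos (by decide)]; ring⟩
  · exact ⟨mA r + 1, by simp, by rw [if_neg (by decide), if_pos (by decide)]; linear_combination -hmm r hr⟩
  · exact ⟨mA r + 1, by simp, by rw [if_neg (by decide), if_neg (by decide)]; ring⟩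
  · exact ⟨1, by simp, by rw [if_pos (by decide), if_neg (by decide)]; linear_combination hmm r hr⟩
  · exact ⟨mA r + 1, by simp, by rw [if_pos (by decide), if_pos (by decide)]; ring⟩
  · exact ⟨1, by simp, by rw [if_neg (by decide), if_pos (by decide)]; ring⟩
  · exact ⟨2, by simp, by rw [if_pos (by decide), if_neg (by decide)]; linear_combination hmm r hr⟩
  · exact ⟨2, by simp, by rw [if_pos (by decide), if_neg (by decide)]; linear_combination hmm r hr⟩
  · exact ⟨2, by simp, by rw [if_neg (by decide), if_pos (by decide)]; ring⟩
  · exact ⟨2, by simp, by rw [if_neg (by decide), if_pos (by decide)]; ring⟩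

lemma hff (x : ZMod (2^r)) : fA r hr (fA r hr x) = x := by
  by_cases hc : piA r hr x = 2 ∨ piA r hr x = 3
  · simp only [fA, if_pos hc, map_add, hpim, add_zero, if_pos hc]
    linear_combination hmm r hr
  · simp only [fA, if_neg hc, add_zero, if_neg hc]

lemma htwo (hr : 3 ≤ r) (x : ZMod (2^r)) (hx : x + x = 0) : x = 0 ∨ x = mA r := by
  haveI : NeZero (2^r) := ⟨by positivity⟩
  have hxv : ((x.val : ℕ) : ZMod (2^r)) = x := by
    simp [ZMod.natCast_val, ZMod.cast_id]
  have hv : (2^r : ℕ) ∣ x.val + x.val := by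
    have : ((x.val + x.val : ℕ) : ZMod (2^r)) = 0 := by
      rw [Nat.cast_add, hxv, hx]
    exact (ZMod.natCast_eq_zero_iff _ _).mp this
  have hlt := ZMod.val_lt x
  have h2 : (2:ℕ)^r = 2 * 2^(r-1) := by rw [← pow_succ']; congr 1; omega
  have hv2 : x.val = 0 ∨ x.val = 2^(r-1) := by
    obtain ⟨k, hk⟩ := hv
    have hk2 : k < 2 := by
      by_contra hk2
      push_neg at hk2
      have : 2^r * 2 ≤ 2^r * k := Nat.mul_le_mul_left _ hk2
      omega
    interval_cases k <;> omega
  rcases hv2 with h | h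
  · left; rw [← hxv, h, Nat.cast_zero]
  · right; rw [← hxv, h]; rfl

end Stmt16Aux

open Stmt16Aux

/-- Let `G = ⟨a⟩` be cyclic of order `2^r`, `r ≥ 3` (realized additively as
`ZMod (2^r)` with `a = 1`), and `S = {a, a², a^{2^{r-1}+1}} = {1, 2, 2^{r-1}+1}`.
Then `Cay(G,S)` is not a CI-digraph: there is `T ⊆ G` with `Cay(G,S) ≅ Cay(G,T)` as
digraphs, but `T ≠ S^σ` for every `σ ∈ Aut(G)`. -/
theorem stmt16 (r : ℕ) (hr : 3 ≤ r) :
    ∃ T : Set (ZMod (2 ^ r)),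
      (∃ e : Equiv.Perm (ZMod (2 ^ r)), ∀ u v : ZMod (2 ^ r),
        cayArcAdd ({(1 : ZMod (2 ^ r)), 2, ((2 ^ (r - 1) + 1 : ℕ) : ZMod (2 ^ r))}) u v ↔
        cayArcAdd T (e u) (e v)) ∧
      ∀ σ : AddAut (ZMod (2 ^ r)),
        (⇑σ) '' ({(1 : ZMod (2 ^ r)), 2, ((2 ^ (r - 1) + 1 : ℕ) : ZMod (2 ^ r))}) ≠ T := by
  have hScast : ((2 ^ (r - 1) + 1 : ℕ) : ZMod (2^r)) = mA r + 1 := by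
    rw [Nat.cast_add, Nat.cast_one]; rfl
  refine ⟨({1, mA r + 1, mA r + 2} : Set (ZMod (2^r))),
    ⟨⟨fA r hr, fA r hr, hff r hr, hff r hr⟩, ?_⟩, ?_⟩
  · intro u v
    simp only [cayArcAdd, hScast, Equiv.coe_fn_mk]
    constructor
    · rintro ⟨s, hs, rfl⟩
      exact hST r hr u s hs
    · rintro ⟨t, ht, hv⟩
      obtain ⟨s, hs, he⟩ := hTS r hr (fA r hr u) t ht
      refine ⟨s, hs, ?_⟩
      have : v = fA r hr (fA r hr v) := (hff r hr v).symm
      rw [this, hv, he, hff r hr]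
  · intro σ h
    rw [hScast] at h
    simp only [Set.image_insert_eq, Set.image_singleton] at h
    have hσm : σ (mA r) = mA r := by
      have ha : σ (mA r) + σ (mA r) = 0 := by rw [← map_add, hmm r hr, map_zero]
      rcases htwo r hr (σ (mA r)) ha with h0 | h1
      · exfalso
        apply hm0 r hr
        exact σ.injective (a₁ := mA r) (a₂ := 0) (by rw [h0, map_zero])
      · exact h1
    have h2 : σ 2 = σ 1 + σ 1 := by
      rw [show (2 : ZMod (2^r)) = 1 + 1 by norm_num, map_add]
    have hm1 : σ (mA r + 1) = mA r + σ 1 := by rw [map_add, hσm]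
    rw [h2, hm1] at h
    set k := σ 1 with hk
    have e1 : (1 : ZMod (2^r)) ∈ ({k, k + k, mA r + k} : Set (ZMod (2^r))) := by
      rw [h]; simp
    have e2 : (mA r + 2 : ZMod (2^r)) ∈ ({k, k + k, mA r + k} : Set (ZMod (2^r))) := by
      rw [h]; simp
    simp only [Set.mem_insert_iff, Set.mem_singleton_iff] at e1 e2
    have hknot2 : ∀ z : ZMod 4, z + z ≠ 1 := by decide
    have hπk : piA r hr k = 1 := by
      rcases e1 with h1 | h1 | h1
      · rw [← h1, hpi1]
      · exfalso
        have := congrArg (piA r hr) h1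
        rw [hpi1, map_add] at this
        exact hknot2 _ this.symm
      · have := congrArg (piA r hr) h1
        rw [hpi1, map_add, hpim, zero_add] at this
        exact this.symm
    have hkk : k + k = 2 := by
      rcases e1 with h1 | h1 | h1
      · rw [← h1]; norm_num
      · exfalso
        have := congrArg (piA r hr) h1
        rw [hpi1, map_add] at this
        exact hknot2 _ this.symm
      · linear_combination -hmm r hr - 2 * h1
    have hπm2 : piA r hr (mA r + 2) = 2 := by rw [map_add, hpim, hpi2, zero_add]
    rcases e2 with h1 | h1 | h1
    · have := congrArg (piA r hr) h1
      rw [hπm2, hπk] at this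
      exact absurd this (by decide)
    · rw [hkk] at h1
      exact hm0 r hr (by linear_combination h1)
    · have hk2 : k = 2 := by linear_combination -h1
      rw [hk2, hpi2] at hπk
      exact absurd hπk (by decide)
end
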